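/- Let 𝒜 be an affine formal model in a reduced K-affinoid algebra A and let (ℒ, ρ) be an (R,𝒜)-Lie algebra. Let f ∈ A be such that ρ(ℒ)(f) ⊆ 𝒜. Then there exist lifts σ₁, σ₂ : ℒ → Der_R(𝒜⟨t⟩) of the anchor ρ (both 𝒜-linear Lie algebra homomorphisms extending the action of ℒ on 𝒜) such that σ₁(x)(t) = ρ(x)(f) and σ₂(x)(t) = −t²·ρ(x)(f) for all x ∈ ℒ. -/

import Mathlib

section AffineFormalModel

variable (R K : Type*) [CommRing R] [IsDomain R] [IsDiscreteValuationRing R] (π : R)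
  [Field K] [Algebra R K] [IsFractionRing R K]
  (A : Type*) [CommRing A] [Algebra K A] [Algebra R A] [IsScalarTower R K A]

/-- An affine formal model `𝒜` in the (reduced `K`-affinoid) algebra `A`: an `R`-subalgebra
of `A` which is an admissible `R`-algebra (topologically of finite type -- every element of
`𝒜` is `π`-adically approximated by elements of a finitely generated `R`-subalgebra -- and
automatically `R`-flat, being contained in a `K`-vector space) with `𝒜 ⊗_R K = A`,
i.e. every element of `A` is carried into `𝒜` by some power of `π`. -/
def IsAffineFormalModel (𝒜 : Subalgebra R A) : Prop :=
  (∀ a : A, ∃ n : ℕ, (π ^ n) • a ∈ 𝒜) ∧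
  ∃ s : Finset A, (↑s : Set A) ⊆ (𝒜 : Set A) ∧
    ∀ x ∈ 𝒜, ∀ n : ℕ, ∃ y ∈ Algebra.adjoin R (↑s : Set A), ∃ w ∈ 𝒜, x - y = (π ^ n) • w

end AffineFormalModel

/-- The `π`-adic completion `𝒜⟨t⟩` of the polynomial ring `𝒜[t]`. -/
noncomputable abbrev PolyPiCompletion' (R : Type*) [CommRing R] (π : R)
    (𝒜 : Type*) [CommRing 𝒜] [Algebra R 𝒜] : Type _ :=
  AdicCompletion (Ideal.span {Polynomial.C (algebraMap R 𝒜 π)}) (Polynomial 𝒜)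

noncomputable instance (R : Type*) [CommRing R] (π : R)
    (𝒜 : Type*) [CommRing 𝒜] [Algebra R 𝒜] :
    Algebra R (PolyPiCompletion' R π 𝒜) :=
  ((algebraMap (Polynomial 𝒜)
      (PolyPiCompletion' R π 𝒜)).comp (algebraMap R (Polynomial 𝒜))).toAlgebra

instance (R : Type*) [CommRing R] (π : R)
    (𝒜 : Type*) [CommRing 𝒜] [Algebra R 𝒜] :
    SMulCommClass R (PolyPiCompletion' R π 𝒜) (PolyPiCompletion' R π 𝒜) :=
  @Algebra.to_smulCommClass R _ _ _ (AdicCompletion.instAlgebra _)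

namespace TwoLifts

open Polynomial

noncomputable section

variable {R B : Type*} [CommRing R] [CommRing B] [Algebra R B] (π : R)

/-- The ideal. -/
abbrev J : Ideal (Polynomial B) := Ideal.span {Polynomial.C (algebraMap R B π)}

/-- Any `R`-derivation of `B[X]` preserves the filtration. -/
lemma der_mem_smul_top (D : Derivation R (Polynomial B) (Polynomial B)) (n : ℕ)
    {p : Polynomial B} (hp : p ∈ ((J π : Ideal (Polynomial B)) ^ n • ⊤ :
      Submodule (Polynomial B) (Polynomial B))) :
    D p ∈ ((J π : Ideal (Polynomial B)) ^ n • ⊤ : Submodule (Polynomial B) (Polynomial B)) := by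
  have htop : ∀ q : Polynomial B,
      q ∈ ((J π : Ideal (Polynomial B)) ^ n • ⊤ : Submodule (Polynomial B) (Polynomial B)) ↔
        q ∈ ((J π : Ideal (Polynomial B)) ^ n) := by
    intro q
    constructor
    · intro h
      have : ((J π : Ideal (Polynomial B)) ^ n • ⊤ : Ideal (Polynomial B)) =
          (J π : Ideal (Polynomial B)) ^ n := by ext x; simp
      rwa [this] at h
    · intro h
      have : ((J π : Ideal (Polynomial B)) ^ n • ⊤ : Ideal (Polynomial B)) =
          (J π : Ideal (Polynomial B)) ^ n := by ext x; simp
      rwa [this]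
  rw [htop] at hp ⊢
  rw [Ideal.span_singleton_pow, Ideal.mem_span_singleton] at hp ⊢
  obtain ⟨q, rfl⟩ := hp
  have hc : D (Polynomial.C (algebraMap R B π)) = 0 := by
    rw [← Polynomial.algebraMap_apply]
    exact D.map_algebraMap π
  have : D (Polynomial.C (algebraMap R B π) ^ n * q) =
      Polynomial.C (algebraMap R B π) ^ n * D q := by
    rw [Derivation.leibniz, Derivation.leibniz_pow, hc, smul_zero, smul_zero, smul_eq_mul, smul_zero, add_zero]
  rw [this]
  exact Dvd.intro _ rfl

/-- The extension of an `R`-derivation of `B[X]` to the `π`-adic completion, as a function. -/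
def extFun (D : Derivation R (Polynomial B) (Polynomial B)) :
    PolyPiCompletion' R π B → PolyPiCompletion' R π B := fun a =>
  ⟨fun n => Quotient.liftOn' (a.val n) (fun p => Submodule.Quotient.mk (D p))
      (fun p q h => by
        refine (Submodule.Quotient.eq _).mpr ?_
        have h' : (Submodule.Quotient.mk p :
            Polynomial B ⧸ ((J π : Ideal (Polynomial B)) ^ n • ⊤ : Submodule _ _)) =
            Submodule.Quotient.mk q := Quotient.sound' h
        have := (Submodule.Quotient.eq _).mp h'
        rw [← map_sub]
        exact der_mem_smul_top π D n this),
    by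
      intro m n hmn
      obtain ⟨p, hp⟩ := Submodule.Quotient.mk_surjective _ (a.val n)
      have hm : a.val m = Submodule.Quotient.mk p := by
        rw [← a.property hmn, ← hp]; rfl
      dsimp only
      rw [← hp, hm]
      rfl⟩

lemma extFun_val (D : Derivation R (Polynomial B) (Polynomial B))
    (a : PolyPiCompletion' R π B) (n : ℕ) (p : Polynomial B)
    (hp : a.val n = Submodule.Quotient.mk p) :
    (extFun π D a).val n = Submodule.Quotient.mk (D p) := by
  show Quotient.liftOn' (a.val n) _ _ = _
  rw [hp]
  rfl

variable {π}

lemma val_surj (a : PolyPiCompletion' R π B) (n : ℕ) :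
    ∃ p : Polynomial B, a.val n = Submodule.Quotient.mk p := by
  obtain ⟨p, hp⟩ := Submodule.Quotient.mk_surjective _ (a.val n)
  exact ⟨p, hp.symm⟩

variable (π)

lemma val_algebraMap (p : Polynomial B) (n : ℕ) :
    (algebraMap (Polynomial B) (PolyPiCompletion' R π B) p).val n =
      Submodule.Quotient.mk p := rfl

lemma val_smulR (r : R) (a : PolyPiCompletion' R π B) :
    r • a = algebraMap (Polynomial B) (PolyPiCompletion' R π B) (algebraMap R (Polynomial B) r)
      * a := by
  refine AdicCompletion.ext fun n => ?_
  obtain ⟨p, hp⟩ := val_surj a n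
  rw [AdicCompletion.val_smul_apply, AdicCompletion.val_mul, val_algebraMap, hp,
    ← Submodule.Quotient.mk_smul]
  show _ = Submodule.Quotient.mk (algebraMap R (Polynomial B) r * p)
  exact congrArg Submodule.Quotient.mk (Algebra.smul_def r p)

/-- The extension of an `R`-derivation of `B[X]` to the completion, as a linear map. -/
def extLin (D : Derivation R (Polynomial B) (Polynomial B)) :
    PolyPiCompletion' R π B →ₗ[R] PolyPiCompletion' R π B where
  toFun := extFun π D
  map_add' a b := by
    refine Subtype.ext (funext fun n => ?_)
    obtain ⟨p, hp⟩ := val_surj a n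
    obtain ⟨q, hq⟩ := val_surj b n
    have hab : (a + b).val n = Submodule.Quotient.mk (p + q) := by
      rw [AdicCompletion.val_add_apply, hp, hq]; rfl
    rw [AdicCompletion.val_add_apply, extFun_val π D _ n _ hab, extFun_val π D a n p hp,
      extFun_val π D b n q hq, map_add]
    rfl
  map_smul' r a := by
    refine Subtype.ext (funext fun n => ?_)
    obtain ⟨p, hp⟩ := val_surj a n
    have hra : (r • a).val n = Submodule.Quotient.mk (algebraMap R (Polynomial B) r * p) := by
      rw [val_smulR, AdicCompletion.val_mul, val_algebraMap, hp]; rfl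
    have hD : D (algebraMap R (Polynomial B) r * p) = algebraMap R (Polynomial B) r * D p := by
      rw [Derivation.leibniz, D.map_algebraMap, smul_zero, add_zero, smul_eq_mul]
    show (extFun π D (r • a)).val n = (r • extFun π D a).val n
    rw [extFun_val π D _ n _ hra, hD, val_smulR, AdicCompletion.val_mul, val_algebraMap,
      extFun_val π D a n p hp]
    rfl

lemma extLin_val (D : Derivation R (Polynomial B) (Polynomial B))
    (a : PolyPiCompletion' R π B) (n : ℕ) (p : Polynomial B)
    (hp : a.val n = Submodule.Quotient.mk p) :
    (extLin π D a).val n = Submodule.Quotient.mk (D p) := extFun_val π D a n p hp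

/-- The extension of an `R`-derivation of `B[X]` to the completion, as a derivation. -/
def extDer (D : Derivation R (Polynomial B) (Polynomial B)) :
    Derivation R (PolyPiCompletion' R π B) (PolyPiCompletion' R π B) where
  toLinearMap :=
    @LinearMap.mk R R _ _ (RingHom.id R) (PolyPiCompletion' R π B) (PolyPiCompletion' R π B) _ _
      Algebra.toModule (AdicCompletion.instModuleOfIsScalarTower _ _)
      ⟨extFun π D, (extLin π D).map_add'⟩ (fun r a => by
        have h := (extLin π D).map_smul' r a
        rw [val_smulR] at h
        exact h)
  map_one_eq_zero' := by
    refine Subtype.ext (funext fun n => ?_)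
    have h1 : (1 : PolyPiCompletion' R π B).val n = Submodule.Quotient.mk 1 := rfl
    show (extLin π D 1).val n = (0 : PolyPiCompletion' R π B).val n
    rw [extLin_val π D 1 n 1 h1, Derivation.map_one_eq_zero, AdicCompletion.val_zero_apply]
    rfl
  leibniz' a b := by
    refine Subtype.ext (funext fun n => ?_)
    obtain ⟨p, hp⟩ := val_surj a n
    obtain ⟨q, hq⟩ := val_surj b n
    have hab : (a * b).val n = Submodule.Quotient.mk (p * q) := by
      rw [AdicCompletion.val_mul, hp, hq]; rfl
    show (extLin π D (a * b)).val n = (a • extLin π D b + b • extLin π D a).val n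
    rw [extLin_val π D _ n _ hab, Derivation.leibniz, AdicCompletion.val_add_apply]
    have h₁ : (a • extLin π D b).val n = Submodule.Quotient.mk (p * D q) := by
      show (a * extLin π D b).val n = _
      rw [AdicCompletion.val_mul, hp, extLin_val π D b n q hq]; rfl
    have h₂ : (b • extLin π D a).val n = Submodule.Quotient.mk (q * D p) := by
      show (b * extLin π D a).val n = _
      rw [AdicCompletion.val_mul, hq, extLin_val π D a n p hp]; rfl
    rw [h₁, h₂]
    rfl

lemma extDer_val (D : Derivation R (Polynomial B) (Polynomial B))
    (a : PolyPiCompletion' R π B) (n : ℕ) (p : Polynomial B)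
    (hp : a.val n = Submodule.Quotient.mk p) :
    (extDer π D a).val n = Submodule.Quotient.mk (D p) := extFun_val π D a n p hp

lemma extDer_algebraMap (D : Derivation R (Polynomial B) (Polynomial B)) (p : Polynomial B) :
    extDer π D (algebraMap (Polynomial B) (PolyPiCompletion' R π B) p) =
      algebraMap (Polynomial B) (PolyPiCompletion' R π B) (D p) :=
  Subtype.ext (funext fun n => extFun_val π D _ n p rfl)

lemma extDer_add (D₁ D₂ : Derivation R (Polynomial B) (Polynomial B)) :
    extDer π (D₁ + D₂) = extDer π D₁ + extDer π D₂ := by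
  refine Derivation.ext fun a => Subtype.ext (funext fun n => ?_)
  obtain ⟨p, hp⟩ := val_surj a n
  rw [Derivation.add_apply, AdicCompletion.val_add_apply, extDer_val π _ a n p hp,
    extDer_val π D₁ a n p hp, extDer_val π D₂ a n p hp, Derivation.add_apply]
  rfl

lemma extDer_smul (c : Polynomial B) (D : Derivation R (Polynomial B) (Polynomial B)) :
    extDer π (c • D) = algebraMap (Polynomial B) (PolyPiCompletion' R π B) c • extDer π D := by
  refine Derivation.ext fun a => Subtype.ext (funext fun n => ?_)
  obtain ⟨p, hp⟩ := val_surj a n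
  have h2 : ((algebraMap (Polynomial B) (PolyPiCompletion' R π B) c • extDer π D) a).val n =
      Submodule.Quotient.mk (c * D p) := by
    show ((algebraMap (Polynomial B) (PolyPiCompletion' R π B) c * extDer π D a)).val n = _
    rw [AdicCompletion.val_mul, val_algebraMap, extDer_val π D a n p hp]
    rfl
  rw [extDer_val π _ a n p hp, h2]
  rfl

lemma extDer_commutator (D₁ D₂ D₃ : Derivation R (Polynomial B) (Polynomial B))
    (h : ∀ p, D₃ p = D₁ (D₂ p) - D₂ (D₁ p)) (a : PolyPiCompletion' R π B) :
    extDer π D₃ a = extDer π D₁ (extDer π D₂ a) - extDer π D₂ (extDer π D₁ a) := by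
  refine Subtype.ext (funext fun n => ?_)
  obtain ⟨p, hp⟩ := val_surj a n
  have h2 : (extDer π D₂ a).val n = Submodule.Quotient.mk (D₂ p) := extDer_val π D₂ a n p hp
  have h1 : (extDer π D₁ a).val n = Submodule.Quotient.mk (D₁ p) := extDer_val π D₁ a n p hp
  rw [AdicCompletion.val_sub_apply, extDer_val π D₃ a n p hp, extDer_val π D₁ _ n _ h2,
    extDer_val π D₂ _ n _ h1, h p]
  rfl

end

noncomputable section PolyLevel

variable {R B : Type*} [CommRing R] [CommRing B] [Algebra R B]

/-- `Polynomial.derivative` as an `R`-derivation of `B[X]`. -/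
def derivDer : Derivation R (Polynomial B) (Polynomial B) where
  toLinearMap := (Polynomial.derivative (R := B)).restrictScalars R
  map_one_eq_zero' := Polynomial.derivative_one
  leibniz' a b := by
    simp only [LinearMap.coe_restrictScalars, Polynomial.derivative_mul, smul_eq_mul]
    ring

@[simp] lemma derivDer_apply (p : Polynomial B) :
    (derivDer (R := R) (B := B)) p = Polynomial.derivative p := rfl

/-- The coefficientwise derivation on `B[X]` induced by a derivation of `B`. -/
def coeffDer (d : Derivation R B B) : Derivation R (Polynomial B) (Polynomial B) :=
  PolynomialModule.equivPolynomialSelf.compDer d.mapCoeffs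

@[simp] lemma coeffDer_C (d : Derivation R B B) (b : B) :
    coeffDer d (Polynomial.C b) = Polynomial.C (d b) := by
  show PolynomialModule.equivPolynomialSelf (d.mapCoeffs (Polynomial.C b)) = _
  rw [Derivation.mapCoeffs_C]
  show PolynomialModule.equivPolynomial (PolynomialModule.single B 0 (d b)) = _
  rw [PolynomialModule.equivPolynomial_single]
  exact Polynomial.monomial_zero_left (a := d b)

@[simp] lemma coeffDer_X (d : Derivation R B B) :
    coeffDer d (Polynomial.X) = 0 := by
  show PolynomialModule.equivPolynomialSelf (d.mapCoeffs Polynomial.X) = _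
  rw [Derivation.mapCoeffs_X, map_zero]

/-- The derivation on `B[X]` acting on coefficients by `d` and sending `X` to `g`. -/
def polyDer (d : Derivation R B B) (g : Polynomial B) :
    Derivation R (Polynomial B) (Polynomial B) :=
  coeffDer d + g • derivDer

@[simp] lemma polyDer_C (d : Derivation R B B) (g : Polynomial B) (b : B) :
    polyDer d g (Polynomial.C b) = Polynomial.C (d b) := by
  rw [polyDer, Derivation.add_apply, Derivation.smul_apply, coeffDer_C, derivDer_apply,
    Polynomial.derivative_C, smul_zero, add_zero]

@[simp] lemma polyDer_X (d : Derivation R B B) (g : Polynomial B) :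
    polyDer d g (Polynomial.X) = g := by
  rw [polyDer, Derivation.add_apply, Derivation.smul_apply, coeffDer_X, derivDer_apply,
    Polynomial.derivative_X, smul_eq_mul, mul_one, zero_add]

/-- Two `R`-derivations of `B[X]` agreeing on constants and on `X` are equal. -/
lemma polyDerivation_ext {D₁ D₂ : Derivation R (Polynomial B) (Polynomial B)}
    (hC : ∀ b, D₁ (Polynomial.C b) = D₂ (Polynomial.C b))
    (hX : D₁ Polynomial.X = D₂ Polynomial.X) : D₁ = D₂ := by
  refine Derivation.ext fun p => ?_
  induction p using Polynomial.induction_on with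
  | C b => exact hC b
  | add p q hp hq => rw [map_add, map_add, hp, hq]
  | monomial n b ih =>
    have h : Polynomial.C b * Polynomial.X ^ (n + 1) =
        Polynomial.C b * Polynomial.X ^ n * Polynomial.X := by ring
    rw [h, D₁.leibniz (Polynomial.C b * Polynomial.X ^ n) Polynomial.X,
      D₂.leibniz (Polynomial.C b * Polynomial.X ^ n) Polynomial.X, ih, hX]

end PolyLevel

noncomputable section Restrict

variable {R A : Type*} [CommRing R] [CommRing A] [Algebra R A]

/-- Restriction of a derivation of `A` to a subalgebra it preserves. -/
def restrictDer (𝒜 : Subalgebra R A) (D : Derivation R A A) (h : ∀ c ∈ 𝒜, D c ∈ 𝒜) :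
    Derivation R ↥𝒜 ↥𝒜 where
  toFun c := ⟨D c, h c c.2⟩
  map_add' a b := Subtype.ext <| by
    push_cast
    rw [map_add]
  map_smul' r a := Subtype.ext <| by
    show D ((r • a : ↥𝒜) : A) = r • D (a : A)
    rw [Subalgebra.coe_smul, Derivation.map_smul]
  map_one_eq_zero' := Subtype.ext <| by
    show D ((1 : ↥𝒜) : A) = (0 : A)
    rw [OneMemClass.coe_one, Derivation.map_one_eq_zero]
  leibniz' a b := Subtype.ext <| by
    show D ((a * b : ↥𝒜) : A) = (a : A) * D (b : A) + (b : A) * D (a : A)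
    rw [MulMemClass.coe_mul, Derivation.leibniz, smul_eq_mul, smul_eq_mul]

@[simp] lemma restrictDer_coe (𝒜 : Subalgebra R A) (D : Derivation R A A)
    (h : ∀ c ∈ 𝒜, D c ∈ 𝒜) (c : ↥𝒜) : (restrictDer 𝒜 D h c : A) = D c := rfl

end Restrict

end TwoLifts

set_option maxHeartbeats 2000000
set_option synthInstance.maxHeartbeats 400000

/-- Let `𝒜` be an affine formal model in a reduced `K`-affinoid algebra
`A` and let `(ℒ, ρ)` be an `(R,𝒜)`-Lie algebra (here realised with anchor taking values in
`Der_R(A)` preserving `𝒜`, via the canonical extension of derivations of `𝒜` to `A`).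
Let `f ∈ A` be such that `ρ(ℒ)(f) ⊆ 𝒜`.  Then there are two lifts
`σ₁, σ₂ : ℒ → Der_R(𝒜⟨t⟩)` of the action of `ℒ` on `𝒜` to the `π`-adic completion
`𝒜⟨t⟩` of `𝒜[t]` — each `σᵢ` is `𝒜`-linear, a Lie algebra homomorphism, and restricts to
`ρ` on `𝒜` — such that `σ₁(x)(t) = ρ(x)(f)` and `σ₂(x)(t) = −t²·ρ(x)(f)` for all
`x ∈ ℒ`. -/
theorem two_lifts_to_completed_polynomial_ring
    {R K : Type*} [CommRing R] [IsDomain R] [IsDiscreteValuationRing R] (π : R)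
    (hπ0 : π ≠ 0) (hπu : ¬IsUnit π) [IsAdicComplete (Ideal.span {π}) R]
    [Field K] [Algebra R K] [IsFractionRing R K]
    {A : Type*} [CommRing A] [Algebra K A] [Algebra R A] [IsScalarTower R K A]
    [IsReduced A]
    (𝒜 : Subalgebra R A) (h𝒜 : IsAffineFormalModel R π A 𝒜)
    {ℒ : Type*} [LieRing ℒ] [LieAlgebra R ℒ] [Module ↥𝒜 ℒ]
    (ρ : ℒ → Derivation R A A)
    (hρadd : ∀ x y : ℒ, ρ (x + y) = ρ x + ρ y)
    (hρA : ∀ (c : ↥𝒜) (x : ℒ), ρ (c • x) = (c : A) • ρ x)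
    (hρLie : ∀ x y : ℒ, ∀ a : A, ρ ⁅x, y⁆ a = ρ x (ρ y a) - ρ y (ρ x a))
    (hstab : ∀ (x : ℒ), ∀ c ∈ 𝒜, ρ x c ∈ 𝒜)
    (hLeib : ∀ (x y : ℒ) (c d : ↥𝒜), (d : A) = ρ x (c : A) →
      ⁅x, c • y⁆ = c • ⁅x, y⁆ + d • y)
    (f : A) (hf : ∀ x : ℒ, ρ x f ∈ 𝒜) :
    ∀ ε : Bool,
      ∃ σ : ℒ → Derivation R (PolyPiCompletion' R π ↥𝒜) (PolyPiCompletion' R π ↥𝒜),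
        (∀ x y : ℒ, σ (x + y) = σ x + σ y) ∧
        (∀ (c : ↥𝒜) (x : ℒ), σ (c • x) =
          algebraMap (Polynomial ↥𝒜) (PolyPiCompletion' R π ↥𝒜) (Polynomial.C c) • σ x) ∧
        (∀ x y : ℒ, ∀ b : PolyPiCompletion' R π ↥𝒜,
          σ ⁅x, y⁆ b = σ x (σ y b) - σ y (σ x b)) ∧
        (∀ (x : ℒ) (c : ↥𝒜),
          σ x (algebraMap (Polynomial ↥𝒜) (PolyPiCompletion' R π ↥𝒜) (Polynomial.C c)) =
            algebraMap (Polynomial ↥𝒜) (PolyPiCompletion' R π ↥𝒜)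
              (Polynomial.C ⟨ρ x c, hstab x c c.2⟩)) ∧
        (∀ x : ℒ,
          σ x (algebraMap (Polynomial ↥𝒜) (PolyPiCompletion' R π ↥𝒜) Polynomial.X) =
            if ε then
              algebraMap (Polynomial ↥𝒜) (PolyPiCompletion' R π ↥𝒜)
                (Polynomial.C ⟨ρ x f, hf x⟩)
            else
              - (algebraMap (Polynomial ↥𝒜) (PolyPiCompletion' R π ↥𝒜) Polynomial.X *
                  algebraMap (Polynomial ↥𝒜) (PolyPiCompletion' R π ↥𝒜) Polynomial.X *
                  algebraMap (Polynomial ↥𝒜) (PolyPiCompletion' R π ↥𝒜)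
                    (Polynomial.C ⟨ρ x f, hf x⟩))) := by
  classical
  intro ε
  set d : ℒ → Derivation R ↥𝒜 ↥𝒜 := fun x => TwoLifts.restrictDer 𝒜 (ρ x) (hstab x) with hd_def
  set c : ℒ → ↥𝒜 := fun x => ⟨ρ x f, hf x⟩ with hc_def
  have hdcoe : ∀ (x : ℒ) (b : ↥𝒜), ((d x b : ↥𝒜) : A) = ρ x (b : A) := fun x b => rfl
  have hd_add : ∀ (x y : ℒ) (b : ↥𝒜), d (x + y) b = d x b + d y b := by
    intro x y b
    refine Subtype.ext ?_
    show ρ (x + y) (b : A) = ((d x b + d y b : ↥𝒜) : A)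
    rw [hρadd, AddMemClass.coe_add, hdcoe, hdcoe]
    rfl
  have hd_smul : ∀ (cc : ↥𝒜) (x : ℒ) (b : ↥𝒜), d (cc • x) b = cc * d x b := by
    intro cc x b
    refine Subtype.ext ?_
    show ρ (cc • x) (b : A) = ((cc * d x b : ↥𝒜) : A)
    rw [hρA, MulMemClass.coe_mul, hdcoe]
    exact smul_eq_mul (α := A) ..
  have hd_br : ∀ (x y : ℒ) (b : ↥𝒜), d ⁅x, y⁆ b = d x (d y b) - d y (d x b) := by
    intro x y b
    refine Subtype.ext ?_
    show ρ ⁅x, y⁆ (b : A) = ((d x (d y b) - d y (d x b) : ↥𝒜) : A)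
    rw [AddSubgroupClass.coe_sub, hdcoe, hdcoe, hdcoe, hdcoe]
    exact hρLie x y b
  have hc_add : ∀ x y : ℒ, c (x + y) = c x + c y := by
    intro x y
    refine Subtype.ext ?_
    show ρ (x + y) f = ρ x f + ρ y f
    rw [hρadd]
    rfl
  have hc_smul : ∀ (cc : ↥𝒜) (x : ℒ), c (cc • x) = cc * c x := by
    intro cc x
    refine Subtype.ext ?_
    show ρ (cc • x) f = (cc : A) * ρ x f
    rw [hρA]
    exact smul_eq_mul (α := A) ..
  have hc_br : ∀ x y : ℒ, c ⁅x, y⁆ = d x (c y) - d y (c x) := by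
    intro x y
    refine Subtype.ext ?_
    show ρ ⁅x, y⁆ f = ((d x (c y) : ↥𝒜) : A) - ((d y (c x) : ↥𝒜) : A)
    rw [hdcoe, hdcoe]
    exact hρLie x y f
  obtain ⟨g, hg1, hg2, hg3, hg4⟩ : ∃ g : ℒ → Polynomial ↥𝒜,
      (∀ x y : ℒ, g (x + y) = g x + g y) ∧
      (∀ (cc : ↥𝒜) (x : ℒ), g (cc • x) = Polynomial.C cc * g x) ∧
      (∀ x y : ℒ, g ⁅x, y⁆ =
        TwoLifts.polyDer (d x) (g x) (g y) - TwoLifts.polyDer (d y) (g y) (g x)) ∧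
      (∀ x : ℒ, algebraMap (Polynomial ↥𝒜) (PolyPiCompletion' R π ↥𝒜) (g x) =
        if ε then
          algebraMap (Polynomial ↥𝒜) (PolyPiCompletion' R π ↥𝒜)
            (Polynomial.C ⟨ρ x f, hf x⟩)
        else
          - (algebraMap (Polynomial ↥𝒜) (PolyPiCompletion' R π ↥𝒜) Polynomial.X *
              algebraMap (Polynomial ↥𝒜) (PolyPiCompletion' R π ↥𝒜) Polynomial.X *
              algebraMap (Polynomial ↥𝒜) (PolyPiCompletion' R π ↥𝒜)
                (Polynomial.C ⟨ρ x f, hf x⟩))) := by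
    cases ε with
    | false =>
      refine ⟨fun x => -(Polynomial.X * Polynomial.X * Polynomial.C (c x)), ?_, ?_, ?_, ?_⟩
      · intro x y
        dsimp only
        rw [hc_add, map_add]
        ring
      · intro cc x
        dsimp only
        rw [hc_smul, map_mul]
        ring
      · intro x y
        dsimp only
        simp only [map_neg, Derivation.leibniz, TwoLifts.polyDer_C, TwoLifts.polyDer_X,
          smul_eq_mul, hc_br, map_sub]
        ring
      · intro x
        dsimp only
        simp only [if_neg (Bool.false_ne_true), map_neg, map_mul]
        rfl
    | true =>
      refine ⟨fun x => Polynomial.C (c x), ?_, ?_, ?_, ?_⟩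
      · intro x y
        dsimp only
        rw [hc_add, map_add]
      · intro cc x
        dsimp only
        rw [hc_smul, map_mul]
      · intro x y
        dsimp only
        rw [TwoLifts.polyDer_C, TwoLifts.polyDer_C, hc_br, map_sub]
      · intro x
        dsimp only
        simp only [if_pos rfl]
        rfl
  refine ⟨fun x => TwoLifts.extDer π (TwoLifts.polyDer (d x) (g x)), ?_, ?_, ?_, ?_, ?_⟩
  · intro x y
    dsimp only
    have hpoly : TwoLifts.polyDer (d (x + y)) (g (x + y)) =
        TwoLifts.polyDer (d x) (g x) + TwoLifts.polyDer (d y) (g y) := by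
      refine TwoLifts.polyDerivation_ext (fun b => ?_) ?_
      · rw [TwoLifts.polyDer_C, Derivation.add_apply, TwoLifts.polyDer_C, TwoLifts.polyDer_C,
          hd_add x y b, map_add]
      · rw [TwoLifts.polyDer_X, Derivation.add_apply, TwoLifts.polyDer_X, TwoLifts.polyDer_X,
          hg1]
    rw [hpoly, TwoLifts.extDer_add]
  · intro cc x
    dsimp only
    have hpoly : TwoLifts.polyDer (d (cc • x)) (g (cc • x)) =
        Polynomial.C cc • TwoLifts.polyDer (d x) (g x) := by
      refine TwoLifts.polyDerivation_ext (fun b => ?_) ?_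
      · rw [TwoLifts.polyDer_C, Derivation.smul_apply, TwoLifts.polyDer_C, hd_smul cc x b,
          smul_eq_mul, map_mul]
      · rw [TwoLifts.polyDer_X, Derivation.smul_apply, TwoLifts.polyDer_X, hg2, smul_eq_mul]
    rw [hpoly, TwoLifts.extDer_smul]
  · intro x y b
    dsimp only
    have hpoly : TwoLifts.polyDer (d ⁅x, y⁆) (g ⁅x, y⁆) =
        ⁅TwoLifts.polyDer (d x) (g x), TwoLifts.polyDer (d y) (g y)⁆ := by
      refine TwoLifts.polyDerivation_ext (fun b => ?_) ?_
      · rw [TwoLifts.polyDer_C, Derivation.commutator_apply]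
        simp only [TwoLifts.polyDer_C]
        rw [hd_br x y b, map_sub]
      · rw [TwoLifts.polyDer_X, Derivation.commutator_apply, TwoLifts.polyDer_X,
          TwoLifts.polyDer_X, hg3]
    exact TwoLifts.extDer_commutator π _ _ _
      (fun p => by rw [hpoly]; exact Derivation.commutator_apply p) b
  · intro x cc
    dsimp only
    rw [TwoLifts.extDer_algebraMap, TwoLifts.polyDer_C]
    rfl
  · intro x
    dsimp only
    rw [TwoLifts.extDer_algebraMap, TwoLifts.polyDer_X]
    exact hg4 x
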